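/- arXiv:2007.07299 — 3 statements merged into one kernel-verified Lean document; each statement's English description precedes it below -/
import Mathlib

section
/- Let $T_1, T_2 \in \mathbb{C}^{m\times m}$ be orthogonal projections, $T_j^\perp = I - T_j$. Define $W^0(\rho) = (T_2 T_1 + T_2^\perp T_1^\perp)\sin \rho\pi + (T_2^\perp T_1 - T_2 T_1^\perp)\cos \rho\pi$. Then $\det W^0(\rho)$ is not identically zero as a function of $\rho \in \mathbb{C}$; in fact $\det W^0$ is an entire function of $\rho$ that is periodic with period $2$. -/
open scoped Real

theorem sin_decomp (z : ℂ) : Complex.sin z = Complex.exp (-(Complex.I*z))/2 * (Complex.exp (2*Complex.I*z) * (-Complex.I) + Complex.I) := by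
  have h : Complex.exp (2*Complex.I*z) = Complex.exp (Complex.I*z) * Complex.exp (Complex.I*z) := by
    rw [← Complex.exp_add]; ring_nf
  have h2 : Complex.exp (-(Complex.I*z)) * Complex.exp (Complex.I*z) = 1 := by
    rw [← Complex.exp_add]; simp
  have h3 : Complex.exp (-z*Complex.I) = Complex.exp (-(Complex.I*z)) := by ring_nf
  have h4 : Complex.exp (z*Complex.I) = Complex.exp (Complex.I*z) := by ring_nf
  rw [Complex.sin, h, h3, h4]
  linear_combination (Complex.exp (Complex.I*z) * Complex.I / 2) * h2

theorem cos_decomp (z : ℂ) : Complex.cos z = Complex.exp (-(Complex.I*z))/2 * (Complex.exp (2*Complex.I*z) * 1 + 1) := by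
  have h : Complex.exp (2*Complex.I*z) = Complex.exp (Complex.I*z) * Complex.exp (Complex.I*z) := by
    rw [← Complex.exp_add]; ring_nf
  have h2 : Complex.exp (-(Complex.I*z)) * Complex.exp (Complex.I*z) = 1 := by
    rw [← Complex.exp_add]; simp
  have h3 : Complex.exp (-z*Complex.I) = Complex.exp (-(Complex.I*z)) := by ring_nf
  have h4 : Complex.exp (z*Complex.I) = Complex.exp (Complex.I*z) := by ring_nf
  rw [Complex.cos, h, h3, h4]
  linear_combination (-(Complex.exp (Complex.I*z))/2) * h2

/-- The characteristic matrix function of the unperturbed problem. -/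
noncomputable def W0 {m : ℕ} (T1 T2 : Matrix (Fin m) (Fin m) ℂ) (ρ : ℂ) :
    Matrix (Fin m) (Fin m) ℂ :=
  Complex.sin (ρ * π) • (T2 * T1 + (1 - T2) * (1 - T1))
    + Complex.cos (ρ * π) • ((1 - T2) * T1 - T2 * (1 - T1))

/-- `det W⁰` is an entire function of `ρ`, periodic with period `2`, and not identically zero. -/
theorem det_W0_entire_periodic_not_zero {m : ℕ} (T1 T2 : Matrix (Fin m) (Fin m) ℂ)
    (hp1 : T1 * T1 = T1) (hh1 : T1.conjTranspose = T1)
    (hp2 : T2 * T2 = T2) (hh2 : T2.conjTranspose = T2) :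
    Differentiable ℂ (fun ρ : ℂ => (W0 T1 T2 ρ).det) ∧
      (∀ ρ : ℂ, (W0 T1 T2 (ρ + 2)).det = (W0 T1 T2 ρ).det) ∧
      (∃ ρ : ℂ, (W0 T1 T2 ρ).det ≠ 0) := by
  set A : Matrix (Fin m) (Fin m) ℂ := T2 * T1 + (1 - T2) * (1 - T1) with hA
  set B : Matrix (Fin m) (Fin m) ℂ := (1 - T2) * T1 - T2 * (1 - T1) with hB
  refine ⟨?_, ?_, ?_⟩
  · -- differentiability
    simp only [Matrix.det_apply', W0]
    apply Differentiable.fun_sum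
    intro σ _
    apply Differentiable.const_mul
    apply Differentiable.fun_finsetProd
    intro i _
    simp only [Matrix.add_apply, Matrix.smul_apply, smul_eq_mul]
    apply Differentiable.add
    · exact ((Complex.differentiable_sin.comp ((differentiable_id.mul_const _)))).mul_const _
    · exact ((Complex.differentiable_cos.comp ((differentiable_id.mul_const _)))).mul_const _
  · -- periodicity
    intro ρ
    have harg : (ρ + 2) * (π : ℂ) = ρ * π + 2 * π := by ring
    simp only [W0, harg, Complex.sin_add_two_pi, Complex.cos_add_two_pi]
  · -- not identically zero
    -- factorization of B + I•A
    set P : Matrix (Fin m) (Fin m) ℂ := Complex.I • T2 + (1 - T2) with hP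
    set Q : Matrix (Fin m) (Fin m) ℂ := T1 + Complex.I • (1 - T1) with hQ
    have hPQ : B + Complex.I • A = P * Q := by
      simp only [hA, hB, hP, hQ, mul_add, add_mul, smul_mul_assoc, mul_smul_comm, smul_smul,
        Complex.I_mul_I, smul_add, neg_one_smul]
      abel
    have hPinv : P * ((-Complex.I) • T2 + (1 - T2)) = 1 := by
      simp only [hP, mul_add, add_mul, smul_mul_assoc, mul_smul_comm, smul_smul,
        mul_sub, sub_mul, mul_one, one_mul, hp2, mul_neg, neg_neg, Complex.I_mul_I,
        neg_smul, one_smul, smul_sub, sub_self, smul_zero]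
      simp [smul_add, smul_sub, smul_smul, Complex.I_mul_I]
    have hQinv : Q * (T1 + (-Complex.I) • (1 - T1)) = 1 := by
      simp only [hQ, mul_add, add_mul, smul_mul_assoc, mul_smul_comm, smul_smul,
        mul_sub, sub_mul, mul_one, one_mul, hp1, mul_neg, neg_neg, Complex.I_mul_I,
        neg_smul, one_smul, smul_sub, sub_self, smul_zero]
      simp [smul_add, smul_sub, smul_smul, Complex.I_mul_I]
    have hdetP : P.det ≠ 0 := by
      intro h
      have := congrArg Matrix.det hPinv
      rw [Matrix.det_mul, h, Matrix.det_one] at this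
      simpa using this
    have hdetQ : Q.det ≠ 0 := by
      intro h
      have := congrArg Matrix.det hQinv
      rw [Matrix.det_mul, h, Matrix.det_one] at this
      simpa using this
    have h0 : (B + Complex.I • A).det ≠ 0 := by
      rw [hPQ, Matrix.det_mul]
      exact mul_ne_zero hdetP hdetQ
    -- the polynomial-type function
    set h : ℂ → ℂ := fun u => (u • (B + (-Complex.I) • A) + (B + Complex.I • A)).det with hh
    have hcont : Continuous h := by
      apply Continuous.matrix_det
      apply Continuous.add
      · exact (continuous_id.smul continuous_const)
      · exact continuous_const
    have hh0 : h 0 ≠ 0 := by simpa [hh] using h0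
    have hev : ∀ᶠ u in nhdsWithin (0:ℂ) {(0:ℂ)}ᶜ, h u ≠ 0 :=
      ((hcont.continuousAt.eventually_ne hh0).filter_mono nhdsWithin_le_nhds)
    obtain ⟨u, hu, hune0⟩ := (hev.and (eventually_mem_nhdsWithin)).exists
    -- choose ρ with exp(2 I ρ π) = u
    have hπ : (π : ℂ) ≠ 0 := by
      simpa using Complex.ofReal_ne_zero.mpr Real.pi_ne_zero
    refine ⟨Complex.log u / (2 * Complex.I * π), ?_⟩
    set ρ : ℂ := Complex.log u / (2 * Complex.I * π) with hρ
    have hexp : Complex.exp (2 * Complex.I * (ρ * π)) = u := by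
      rw [hρ]
      have : 2 * Complex.I * (Complex.log u / (2 * Complex.I * π) * π) = Complex.log u := by
        field_simp
      rw [this, Complex.exp_log hune0]
    have hW : W0 T1 T2 ρ = (Complex.exp (-(Complex.I*(ρ*π)))/2) •
        (u • (B + (-Complex.I) • A) + (B + Complex.I • A)) := by
      rw [show W0 T1 T2 ρ = Complex.sin (ρ*π) • A + Complex.cos (ρ*π) • B from rfl,
        sin_decomp (ρ*π), cos_decomp (ρ*π), hexp]
      module
    rw [hW, Matrix.det_smul]
    apply mul_ne_zero
    · apply pow_ne_zero
      exact div_ne_zero (Complex.exp_ne_zero _) two_ne_zero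
    · exact hu
end

section
/- Let $(\varkappa_n)_{n\ge0} \in \ell^2$ be a real sequence. Then the series $F(x) = \sum_{n=0}^\infty \varkappa_n \cos((n + \varkappa'_n) x)$, where $(\varkappa'_n) \in \ell^2$ is a fixed real sequence with $\sup_n |\varkappa'_n| < 1/4$, converges in $L^2(0,\pi)$ and satisfies $\|F\|_{L^2(0,\pi)} \le C \|(\varkappa_n)\|_{\ell^2}$, with $C$ depending only on $(\varkappa'_n)$. -/
open MeasureTheory Filter
open scoped Real

-- step 1: integral of cos(c x)
lemma myInt_cos (c : ℝ) (hc : c ≠ 0) : ∫ x in (0:ℝ)..π, Real.cos (c*x) = Real.sin (c*π)/c := by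
  have := intervalIntegral.mul_integral_comp_mul_left (a := (0:ℝ)) (b := π) (f := Real.cos) (c := c)
  rw [integral_cos] at this
  rw [eq_div_iff hc, mul_comm]
  simpa using this

lemma myInt_cos_bound (c : ℝ) : |∫ x in (0:ℝ)..π, Real.cos (c*x)| ≤ π := by
  have h := intervalIntegral.norm_integral_le_of_norm_le_const (C := 1)
    (f := fun x => Real.cos (c*x)) (a := (0:ℝ)) (b := π)
    (fun x _ => by simpa using Real.abs_cos_le_one (c*x))
  simpa [abs_of_nonneg Real.pi_nonneg] using h

lemma mySin_shift (k : ℤ) (t : ℝ) : |Real.sin ((k + t)*π)| = |Real.sin (t*π)| := by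
  have : (k + t) * π = t*π + k*π := by ring
  rw [this, Real.sin_add, Real.sin_int_mul_pi, mul_zero, add_zero, abs_mul,
    Real.abs_cos_int_mul_pi, mul_one]

lemma mySin_lin (t : ℝ) : |Real.sin (t*π)| ≤ π * |t| := by
  calc |Real.sin (t*π)| ≤ |t*π| := Real.abs_sin_le_abs
  _ = π * |t| := by rw [abs_mul, abs_of_nonneg Real.pi_nonneg]; ring

-- Gram integral
noncomputable def myG (a b : ℝ) : ℝ := ∫ x in (0:ℝ)..π, Real.cos (a*x) * Real.cos (b*x)

lemma myG_eq (a b : ℝ) :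
    myG a b = ((∫ x in (0:ℝ)..π, Real.cos ((a-b)*x)) + ∫ x in (0:ℝ)..π, Real.cos ((a+b)*x))/2 := by
  unfold myG
  have h : ∀ x : ℝ, Real.cos (a*x) * Real.cos (b*x)
      = (Real.cos ((a-b)*x) + Real.cos ((a+b)*x))/2 := by
    intro x
    have h1 := Real.cos_add (a*x) (b*x)
    have h2 := Real.cos_sub (a*x) (b*x)
    have e1 : (a+b)*x = a*x + b*x := by ring
    have e2 : (a-b)*x = a*x - b*x := by ring
    rw [e1, e2, h1, h2]; ring
  simp_rw [h]
  rw [intervalIntegral.integral_div, intervalIntegral.integral_add]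
  · exact (Real.continuous_cos.comp (continuous_const.mul continuous_id)).intervalIntegrable _ _
  · exact (Real.continuous_cos.comp (continuous_const.mul continuous_id)).intervalIntegrable _ _

lemma myG_bound_diag (a b : ℝ) : |myG a b| ≤ π := by
  rw [myG_eq]
  have h1 := myInt_cos_bound (a-b)
  have h2 := myInt_cos_bound (a+b)
  rw [abs_div]
  have : |(2:ℝ)| = 2 := by norm_num
  rw [this]
  have := abs_add_le (∫ x in (0:ℝ)..π, Real.cos ((a-b)*x)) (∫ x in (0:ℝ)..π, Real.cos ((a+b)*x))
  linarith

lemma myHalf_bound (r D S : ℝ) (hD : 0 < D) (hr : D ≤ |r|) (hS : |Real.sin (r*π)| ≤ S) :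
    |∫ x in (0:ℝ)..π, Real.cos (r*x)| ≤ S / D := by
  have hrne : r ≠ 0 := by
    intro h; rw [h] at hr; simp at hr; linarith
  rw [myInt_cos r hrne, abs_div]
  exact div_le_div₀ (le_trans (abs_nonneg _) hS) hS hD hr

lemma myG_offdiag (n m : ℕ) (hnm : n ≠ m) (dn dm c : ℝ) (hc : c < 1/4)
    (h1 : |dn| ≤ c) (h2 : |dm| ≤ c) :
    |myG ((n:ℝ)+dn) ((m:ℝ)+dm)| ≤ π*(|dn|+|dm|) / (|(n:ℝ)-(m:ℝ)| - 1/2) := by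
  suffices h : ∀ D S : ℝ, D = |(n:ℝ)-(m:ℝ)| - 1/2 → S = π*(|dn|+|dm|) →
      |myG ((n:ℝ)+dn) ((m:ℝ)+dm)| ≤ S / D by
    exact h _ _ rfl rfl
  intro D S hDdef hSdef
  have hge1 : (1:ℝ) ≤ |(n:ℝ)-(m:ℝ)| := by
    have hne : (n:ℤ) - (m:ℤ) ≠ 0 := by
      have : ((n:ℤ)) ≠ ((m:ℤ)) := by exact_mod_cast hnm
      omega
    have h : (1:ℤ) ≤ |(n:ℤ) - (m:ℤ)| := Int.one_le_abs hne
    have he : ((n:ℝ)-(m:ℝ)) = (((n:ℤ)-(m:ℤ) : ℤ):ℝ) := by push_cast; ring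
    rw [he, ← Int.cast_abs]
    exact_mod_cast h
  have hD : 0 < D := by rw [hDdef]; linarith
  have hcnn : 0 ≤ c := le_trans (abs_nonneg _) h1
  have hSnn : 0 ≤ S := by rw [hSdef]; positivity
  rw [myG_eq]
  -- first term
  have hA : |∫ x in (0:ℝ)..π, Real.cos ((((n:ℝ)+dn)-((m:ℝ)+dm))*x)| ≤ S / D := by
    apply myHalf_bound _ _ _ hD
    · have : ((n:ℝ)+dn)-((m:ℝ)+dm) = ((n:ℝ)-(m:ℝ)) + (dn - dm) := by ring
      rw [this]
      have h3 : |dn - dm| ≤ 1/2 := by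
        have := abs_sub (dn) (dm); have := abs_sub_abs_le_abs_sub dn dm
        calc |dn - dm| ≤ |dn| + |dm| := abs_sub _ _
        _ ≤ 1/2 := by linarith
      have habs : |((n:ℝ)-(m:ℝ))| - |dn-dm| ≤ |((n:ℝ)-(m:ℝ)) + (dn-dm)| := by
        have h := abs_add_le (((n:ℝ)-(m:ℝ)) + (dn-dm)) (-(dn-dm))
        simp only [add_neg_cancel_right, abs_neg] at h
        linarith
      linarith
    · have he : ((n:ℝ)+dn)-((m:ℝ)+dm) = (((n:ℤ)-(m:ℤ) : ℤ):ℝ) + (dn - dm) := by push_cast; ring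
      rw [he, mySin_shift]
      exact le_trans (mySin_lin _) (by rw [hSdef]; gcongr; exact abs_sub _ _)
  have hB : |∫ x in (0:ℝ)..π, Real.cos ((((n:ℝ)+dn)+((m:ℝ)+dm))*x)| ≤ S / D := by
    apply myHalf_bound _ _ _ hD
    · have : ((n:ℝ)+dn)+((m:ℝ)+dm) = ((n:ℝ)+(m:ℝ)) + (dn + dm) := by ring
      rw [this]
      have h3 : |dn + dm| ≤ 1/2 := by
        calc |dn + dm| ≤ |dn| + |dm| := abs_add_le _ _
        _ ≤ 1/2 := by linarith
      have hnm2 : |(n:ℝ)-(m:ℝ)| ≤ (n:ℝ)+(m:ℝ) := by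
        have := abs_sub_abs_le_abs_sub (n:ℝ) (m:ℝ)
        have h4 : |(n:ℝ)-(m:ℝ)| ≤ |(n:ℝ)| + |(m:ℝ)| := abs_sub _ _
        simpa [abs_of_nonneg (Nat.cast_nonneg n : (0:ℝ) ≤ n),
          abs_of_nonneg (Nat.cast_nonneg m : (0:ℝ) ≤ m)] using h4
      have habs : ((n:ℝ)+(m:ℝ)) - |dn+dm| ≤ |((n:ℝ)+(m:ℝ)) + (dn+dm)| := by
        have h := abs_add_le (((n:ℝ)+(m:ℝ)) + (dn+dm)) (-(dn+dm))
        simp only [add_neg_cancel_right, abs_neg] at h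
        have h5 : |(n:ℝ)+(m:ℝ)| = (n:ℝ)+(m:ℝ) := abs_of_nonneg (by positivity)
        rw [h5] at h
        linarith
      linarith
    · have he : ((n:ℝ)+dn)+((m:ℝ)+dm) = (((n:ℤ)+(m:ℤ) : ℤ):ℝ) + (dn + dm) := by push_cast; ring
      rw [he, mySin_shift]
      exact le_trans (mySin_lin _) (by rw [hSdef]; gcongr; exact abs_add_le _ _)
  calc |(_ + _)/2| ≤ (S/D + S/D)/2 := by
        rw [abs_div]
        have : |(2:ℝ)| = 2 := by norm_num
        rw [this]
        have := abs_add_le (∫ x in (0:ℝ)..π, Real.cos ((((n:ℝ)+dn)-((m:ℝ)+dm))*x))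
          (∫ x in (0:ℝ)..π, Real.cos ((((n:ℝ)+dn)+((m:ℝ)+dm))*x))
        gcongr
        linarith
  _ = S / D := by ring

lemma my_ge1 {n m : ℕ} (hnm : n ≠ m) : (1:ℝ) ≤ |(n:ℝ)-(m:ℝ)| := by
  have hne : (n:ℤ) - (m:ℤ) ≠ 0 := by
    have : ((n:ℤ)) ≠ ((m:ℤ)) := by exact_mod_cast hnm
    omega
  have h : (1:ℤ) ≤ |(n:ℤ) - (m:ℤ)| := Int.one_le_abs hne
  have he : ((n:ℝ)-(m:ℝ)) = (((n:ℤ)-(m:ℤ) : ℤ):ℝ) := by push_cast; ring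
  rw [he, ← Int.cast_abs]
  exact_mod_cast h

-- tail sum of 1/(k+1)^2 type
lemma myT_hasSum : HasSum (fun k:ℕ => 4/((k:ℝ)+1)^2) (4*(π^2/6)) := by
  have h := hasSum_zeta_two
  have h1 : HasSum (fun k:ℕ => (1:ℝ)/((k:ℝ)+1)^2) (π^2/6) := by
    have h4 := (hasSum_nat_add_iff' (f := fun n:ℕ => (1:ℝ)/(n:ℝ)^2) (g := π^2/6) 1).2 h
    have h3 : (∑ i ∈ Finset.range 1, (1:ℝ)/((i:ℝ))^2) = 0 := by norm_num
    rw [h3, sub_zero] at h4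
    convert h4 using 2 with k
    · rfl
    push_cast
    ring
  simpa [mul_div_assoc, div_eq_mul_inv] using h1.mul_left 4

lemma myT_le : ∑' k:ℕ, 4/((k:ℝ)+1)^2 ≤ 7 := by
  rw [myT_hasSum.tsum_eq]
  have h := Real.pi_lt_d2
  nlinarith [Real.pi_pos]

-- row sum bound
lemma myRow (s : Finset ℕ) (n : ℕ) :
    ∑ m ∈ s.erase n, ((|(n:ℝ)-(m:ℝ)| - 1/2)⁻¹)^2 ≤ 14 := by
  have hterm : ∀ m ∈ s.erase n, ((|(n:ℝ)-(m:ℝ)| - 1/2)⁻¹)^2 ≤ 4/((n:ℝ)-(m:ℝ))^2 := by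
    intro m hm
    have hne : n ≠ m := (Finset.ne_of_mem_erase hm).symm
    have h1 := my_ge1 hne
    have habs : 0 ≤ |(n:ℝ)-(m:ℝ)| := abs_nonneg _
    have h2 : |(n:ℝ)-(m:ℝ)|/2 ≤ |(n:ℝ)-(m:ℝ)| - 1/2 := by linarith
    have h3 : (0:ℝ) < |(n:ℝ)-(m:ℝ)| - 1/2 := by linarith
    have h4 : (|(n:ℝ)-(m:ℝ)| - 1/2)⁻¹ ≤ (|(n:ℝ)-(m:ℝ)|/2)⁻¹ := by
      apply inv_anti₀ (by linarith) h2
    have h5 : 0 ≤ (|(n:ℝ)-(m:ℝ)| - 1/2)⁻¹ := by positivity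
    calc ((|(n:ℝ)-(m:ℝ)| - 1/2)⁻¹)^2 ≤ ((|(n:ℝ)-(m:ℝ)|/2)⁻¹)^2 := by
          apply pow_le_pow_left₀ h5 h4
    _ = 4/(|(n:ℝ)-(m:ℝ)|)^2 := by
          rw [inv_div, div_pow]; norm_num
    _ = 4/((n:ℝ)-(m:ℝ))^2 := by rw [sq_abs]
  calc ∑ m ∈ s.erase n, ((|(n:ℝ)-(m:ℝ)| - 1/2)⁻¹)^2
      ≤ ∑ m ∈ s.erase n, 4/((n:ℝ)-(m:ℝ))^2 := Finset.sum_le_sum hterm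
  _ = (∑ m ∈ (s.erase n).filter (· < n), 4/((n:ℝ)-(m:ℝ))^2)
      + ∑ m ∈ (s.erase n).filter (¬ · < n), 4/((n:ℝ)-(m:ℝ))^2 :=
      (Finset.sum_filter_add_sum_filter_not _ _ _).symm
  _ ≤ 7 + 7 := by
      gcongr
      · -- m < n part
        have he : ∀ m ∈ (s.erase n).filter (· < n),
            4/((n:ℝ)-(m:ℝ))^2 = 4/(((n - m - 1 : ℕ):ℝ)+1)^2 := by
          intro m hm
          simp only [Finset.mem_filter] at hm
          have : ((n - m - 1 : ℕ):ℝ) + 1 = (n:ℝ)-(m:ℝ) := by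
            have : (n - m - 1 : ℕ) + 1 = n - m := by omega
            have h2 : ((n - m : ℕ):ℝ) = (n:ℝ)-(m:ℝ) := by
              rw [Nat.cast_sub (le_of_lt hm.2)]
            rw [← h2, ← this]; push_cast; ring
          rw [this]
        have hinj : ∀ x ∈ (s.erase n).filter (· < n), ∀ y ∈ (s.erase n).filter (· < n),
            n - x - 1 = n - y - 1 → x = y := by
          intro x hx y hy hxy
          simp only [Finset.mem_filter] at hx hy
          omega
        have heq : ∑ m ∈ (s.erase n).filter (· < n), 4/((n:ℝ)-(m:ℝ))^2
            = ∑ k ∈ ((s.erase n).filter (· < n)).image (fun m => n - m - 1),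
              4/((k:ℝ)+1)^2 := by
          rw [Finset.sum_image hinj]
          exact Finset.sum_congr rfl he
        rw [heq]
        calc _ ≤ ∑' k:ℕ, 4/((k:ℝ)+1)^2 := by
              apply Summable.sum_le_tsum _ (fun _ _ => by positivity)
              exact myT_hasSum.summable
        _ ≤ 7 := myT_le
      · -- m > n part
        have he : ∀ m ∈ (s.erase n).filter (¬ · < n),
            4/((n:ℝ)-(m:ℝ))^2 = 4/(((m - n - 1 : ℕ):ℝ)+1)^2 := by
          intro m hm
          simp only [Finset.mem_filter, not_lt] at hm
          have hmn : n < m := lt_of_le_of_ne hm.2 (Finset.ne_of_mem_erase hm.1).symm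
          have : ((m - n - 1 : ℕ):ℝ) + 1 = (m:ℝ)-(n:ℝ) := by
            have h1 : (m - n - 1 : ℕ) + 1 = m - n := by omega
            have h2 : ((m - n : ℕ):ℝ) = (m:ℝ)-(n:ℝ) := by
              rw [Nat.cast_sub (le_of_lt hmn)]
            rw [← h2, ← h1]; push_cast; ring
          rw [this]
          rw [show ((n:ℝ)-(m:ℝ))^2 = ((m:ℝ)-(n:ℝ))^2 by ring]
        have hinj : ∀ x ∈ (s.erase n).filter (¬ · < n), ∀ y ∈ (s.erase n).filter (¬ · < n),
            x - n - 1 = y - n - 1 → x = y := by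
          intro x hx y hy hxy
          simp only [Finset.mem_filter, not_lt] at hx hy
          have hx2 : n < x := lt_of_le_of_ne hx.2 (Finset.ne_of_mem_erase hx.1).symm
          have hy2 : n < y := lt_of_le_of_ne hy.2 (Finset.ne_of_mem_erase hy.1).symm
          omega
        have heq : ∑ m ∈ (s.erase n).filter (¬ · < n), 4/((n:ℝ)-(m:ℝ))^2
            = ∑ k ∈ ((s.erase n).filter (¬ · < n)).image (fun m => m - n - 1),
              4/((k:ℝ)+1)^2 := by
          rw [Finset.sum_image hinj]
          exact Finset.sum_congr rfl he
        rw [heq]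
        calc _ ≤ ∑' k:ℕ, 4/((k:ℝ)+1)^2 := by
              apply Summable.sum_le_tsum _ (fun _ _ => by positivity)
              exact myT_hasSum.summable
        _ ≤ 7 := myT_le
  _ = 14 := by norm_num

lemma myCS (t : Finset ℕ) (f g : ℕ → ℝ) (hf : ∀ m ∈ t, 0 ≤ f m) (hg : ∀ m ∈ t, 0 ≤ g m) :
    ∑ m ∈ t, f m * g m ≤ Real.sqrt (∑ m ∈ t, f m^2) * Real.sqrt (∑ m ∈ t, g m^2) := by
  have h := Finset.sum_mul_sq_le_sq_mul_sq t f g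
  have hL : 0 ≤ ∑ m ∈ t, f m * g m :=
    Finset.sum_nonneg (fun m hm => mul_nonneg (hf m hm) (hg m hm))
  have hA : 0 ≤ ∑ m ∈ t, f m^2 := Finset.sum_nonneg (fun m _ => sq_nonneg _)
  have hB : 0 ≤ ∑ m ∈ t, g m^2 := Finset.sum_nonneg (fun m _ => sq_nonneg _)
  rw [← Real.sqrt_mul hA]
  exact (Real.le_sqrt hL (mul_nonneg hA hB)).2 h

lemma mySqrt14 : Real.sqrt 14 ≤ 4 := by
  rw [show (4:ℝ) = Real.sqrt 16 by
    rw [show (16:ℝ) = 4^2 by norm_num, Real.sqrt_sq (by norm_num)]]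
  exact Real.sqrt_le_sqrt (by norm_num)

-- Main quadratic form bound
lemma myQuad (δ : ℕ → ℝ) (c : ℝ) (hc : c < 1/4) (hδ : ∀ n, |δ n| ≤ c)
    (hδ2 : Summable (fun n => δ n ^2)) (a : ℕ → ℝ) (s : Finset ℕ) :
    ∫ x in (0:ℝ)..π, (∑ n ∈ s, a n * Real.cos (((n:ℝ)+δ n)*x))^2
      ≤ (π + 8*π*Real.sqrt (∑' n, δ n^2)) * ∑ n ∈ s, (a n)^2 := by
  classical
  have hcont : ∀ n : ℕ, Continuous (fun x : ℝ => a n * Real.cos (((n:ℝ)+δ n)*x)) :=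
    fun n => continuous_const.mul (Real.continuous_cos.comp (continuous_const.mul continuous_id))
  -- expand the square
  have hexp : ∫ x in (0:ℝ)..π, (∑ n ∈ s, a n * Real.cos (((n:ℝ)+δ n)*x))^2
      = ∑ n ∈ s, ∑ m ∈ s, a n * a m * myG ((n:ℝ)+δ n) ((m:ℝ)+δ m) := by
    have h1 : ∀ x : ℝ, (∑ n ∈ s, a n * Real.cos (((n:ℝ)+δ n)*x))^2
        = ∑ n ∈ s, ∑ m ∈ s, (a n * a m) * (Real.cos (((n:ℝ)+δ n)*x) * Real.cos (((m:ℝ)+δ m)*x)) := by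
      intro x
      rw [sq, Finset.sum_mul_sum]
      apply Finset.sum_congr rfl; intro n _
      apply Finset.sum_congr rfl; intro m _
      ring
    simp_rw [h1]
    rw [intervalIntegral.integral_finset_sum]
    · apply Finset.sum_congr rfl; intro n _
      rw [intervalIntegral.integral_finset_sum]
      · apply Finset.sum_congr rfl; intro m _
        rw [intervalIntegral.integral_const_mul]
        rfl
      · intro m _
        exact (((continuous_const.mul ((Real.continuous_cos.comp (continuous_const.mul continuous_id)).mul
          (Real.continuous_cos.comp (continuous_const.mul continuous_id))))).intervalIntegrable _ _)
    · intro n _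
      apply Continuous.intervalIntegrable
      continuity
  rw [hexp]
  -- abbreviations
  have hA : (0:ℝ) ≤ ∑ n ∈ s, (a n)^2 := Finset.sum_nonneg (fun _ _ => sq_nonneg _)
  have hwnn : ∀ n m : ℕ, n ≠ m → 0 ≤ (|(n:ℝ)-(m:ℝ)| - 1/2)⁻¹ := by
    intro n m hne
    have := my_ge1 hne
    exact inv_nonneg.2 (by linarith)
  -- split into diagonal and off-diagonal
  have hsplit : (∑ n ∈ s, ∑ m ∈ s, a n * a m * myG ((n:ℝ)+δ n) ((m:ℝ)+δ m))
      = (∑ n ∈ s, a n * a n * myG ((n:ℝ)+δ n) ((n:ℝ)+δ n))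
        + ∑ n ∈ s, ∑ m ∈ s.erase n, a n * a m * myG ((n:ℝ)+δ n) ((m:ℝ)+δ m) := by
    rw [← Finset.sum_add_distrib]
    apply Finset.sum_congr rfl; intro n hn
    exact (Finset.add_sum_erase s _ hn).symm
  rw [hsplit]
  -- diagonal bound
  have hdiag : (∑ n ∈ s, a n * a n * myG ((n:ℝ)+δ n) ((n:ℝ)+δ n)) ≤ π * ∑ n ∈ s, (a n)^2 := by
    rw [Finset.mul_sum]
    apply Finset.sum_le_sum
    intro n _
    have h1 : myG ((n:ℝ)+δ n) ((n:ℝ)+δ n) ≤ π := le_trans (le_abs_self _) (myG_bound_diag _ _)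
    have h2 : a n * a n = (a n)^2 := (sq (a n)).symm
    rw [h2]
    calc (a n)^2 * myG ((n:ℝ)+δ n) ((n:ℝ)+δ n) ≤ (a n)^2 * π :=
          mul_le_mul_of_nonneg_left h1 (sq_nonneg _)
    _ = π * (a n)^2 := mul_comm _ _
  -- off-diagonal bound
  have hOD : (∑ n ∈ s, ∑ m ∈ s.erase n, a n * a m * myG ((n:ℝ)+δ n) ((m:ℝ)+δ m))
      ≤ (8*π*Real.sqrt (∑' n, δ n^2)) * ∑ n ∈ s, (a n)^2 := by
    -- bound by the absolute kernel
    have step1 : (∑ n ∈ s, ∑ m ∈ s.erase n, a n * a m * myG ((n:ℝ)+δ n) ((m:ℝ)+δ m))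
        ≤ ∑ n ∈ s, ∑ m ∈ s.erase n,
          (π * (|a n| * |δ n| * (|(n:ℝ)-(m:ℝ)| - 1/2)⁻¹ * |a m|)
          + π * (|a n| * (|a m| * |δ m| * (|(n:ℝ)-(m:ℝ)| - 1/2)⁻¹))) := by
      apply Finset.sum_le_sum; intro n _
      apply Finset.sum_le_sum; intro m hm
      have hne : n ≠ m := (Finset.ne_of_mem_erase hm).symm
      have hG := myG_offdiag n m hne (δ n) (δ m) c hc (hδ n) (hδ m)
      calc a n * a m * myG ((n:ℝ)+δ n) ((m:ℝ)+δ m)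
          ≤ |a n * a m * myG ((n:ℝ)+δ n) ((m:ℝ)+δ m)| := le_abs_self _
      _ = |a n| * |a m| * |myG ((n:ℝ)+δ n) ((m:ℝ)+δ m)| := by rw [abs_mul, abs_mul]
      _ ≤ |a n| * |a m| * (π*(|δ n|+|δ m|) / (|(n:ℝ)-(m:ℝ)| - 1/2)) := by
            apply mul_le_mul_of_nonneg_left hG (by positivity)
      _ = π * (|a n| * |δ n| * (|(n:ℝ)-(m:ℝ)| - 1/2)⁻¹ * |a m|)
          + π * (|a n| * (|a m| * |δ m| * (|(n:ℝ)-(m:ℝ)| - 1/2)⁻¹)) := by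
            rw [div_eq_mul_inv]; ring
    -- split, symmetrize
    have step2 : ∑ n ∈ s, ∑ m ∈ s.erase n,
          (π * (|a n| * |δ n| * (|(n:ℝ)-(m:ℝ)| - 1/2)⁻¹ * |a m|)
          + π * (|a n| * (|a m| * |δ m| * (|(n:ℝ)-(m:ℝ)| - 1/2)⁻¹)))
        = 2 * π * ∑ n ∈ s, |a n| * |δ n|
          * (∑ m ∈ s.erase n, |a m| * (|(n:ℝ)-(m:ℝ)| - 1/2)⁻¹) := by
      have hsw : ∑ n ∈ s, ∑ m ∈ s.erase n,
            π * (|a n| * (|a m| * |δ m| * (|(n:ℝ)-(m:ℝ)| - 1/2)⁻¹))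
          = ∑ n ∈ s, ∑ m ∈ s.erase n,
            π * (|a n| * |δ n| * (|(n:ℝ)-(m:ℝ)| - 1/2)⁻¹ * |a m|) := by
        rw [Finset.sum_comm' (s' := fun y => s.erase y) (t' := s)
          (fun x y => by
            simp only [Finset.mem_erase]
            constructor
            · rintro ⟨hx, hyx, hy⟩; exact ⟨⟨fun h => hyx h.symm, hx⟩, hy⟩
            · rintro ⟨⟨hxy, hx⟩, hy⟩; exact ⟨hx, fun h => hxy h.symm, hy⟩)]
        apply Finset.sum_congr rfl; intro n _
        apply Finset.sum_congr rfl; intro m _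
        rw [abs_sub_comm ((m:ℝ)) ((n:ℝ))]
        ring
      simp_rw [Finset.sum_add_distrib]
      rw [hsw]
      simp only [Finset.mul_sum]
      rw [← Finset.sum_add_distrib]
      simp_rw [← Finset.sum_add_distrib]
      apply Finset.sum_congr rfl; intro n _
      apply Finset.sum_congr rfl; intro m _
      ring
    -- row estimate and Cauchy-Schwarz
    have hrow : ∀ n ∈ s, ∑ m ∈ s.erase n, |a m| * (|(n:ℝ)-(m:ℝ)| - 1/2)⁻¹
        ≤ Real.sqrt (∑ k ∈ s, (a k)^2) * 4 := by
      intro n _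
      calc ∑ m ∈ s.erase n, |a m| * (|(n:ℝ)-(m:ℝ)| - 1/2)⁻¹
          ≤ Real.sqrt (∑ m ∈ s.erase n, |a m|^2)
            * Real.sqrt (∑ m ∈ s.erase n, ((|(n:ℝ)-(m:ℝ)| - 1/2)⁻¹)^2) :=
            myCS _ _ _ (fun m _ => abs_nonneg _)
              (fun m hm => hwnn n m (Finset.ne_of_mem_erase hm).symm)
      _ ≤ Real.sqrt (∑ k ∈ s, (a k)^2) * 4 := by
            apply mul_le_mul
            · apply Real.sqrt_le_sqrt
              calc ∑ m ∈ s.erase n, |a m|^2 = ∑ m ∈ s.erase n, (a m)^2 :=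
                    Finset.sum_congr rfl (fun m _ => sq_abs _)
              _ ≤ ∑ k ∈ s, (a k)^2 :=
                    Finset.sum_le_sum_of_subset_of_nonneg
                      (fun x hx => Finset.mem_of_mem_erase hx)
                      (fun m _ _ => sq_nonneg _)
            · exact le_trans (Real.sqrt_le_sqrt (myRow s n)) mySqrt14
            · exact Real.sqrt_nonneg _
            · exact Real.sqrt_nonneg _
    have hcs2 : ∑ n ∈ s, |a n| * |δ n| ≤ Real.sqrt (∑ k ∈ s, (a k)^2)
        * Real.sqrt (∑' k, δ k^2) := by
      calc ∑ n ∈ s, |a n| * |δ n|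
          ≤ Real.sqrt (∑ n ∈ s, |a n|^2) * Real.sqrt (∑ n ∈ s, |δ n|^2) :=
            myCS _ _ _ (fun _ _ => abs_nonneg _) (fun _ _ => abs_nonneg _)
      _ ≤ Real.sqrt (∑ k ∈ s, (a k)^2) * Real.sqrt (∑' k, δ k^2) := by
            apply mul_le_mul
            · apply Real.sqrt_le_sqrt
              exact le_of_eq (Finset.sum_congr rfl (fun n _ => sq_abs _))
            · apply Real.sqrt_le_sqrt
              calc ∑ n ∈ s, |δ n|^2 = ∑ n ∈ s, (δ n)^2 :=
                    Finset.sum_congr rfl (fun n _ => sq_abs _)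
              _ ≤ ∑' k, δ k^2 := Summable.sum_le_tsum s (fun _ _ => sq_nonneg _) hδ2
            · exact Real.sqrt_nonneg _
            · exact Real.sqrt_nonneg _
    calc (∑ n ∈ s, ∑ m ∈ s.erase n, a n * a m * myG ((n:ℝ)+δ n) ((m:ℝ)+δ m))
        ≤ _ := step1
    _ = 2 * π * ∑ n ∈ s, |a n| * |δ n|
          * (∑ m ∈ s.erase n, |a m| * (|(n:ℝ)-(m:ℝ)| - 1/2)⁻¹) := step2
    _ ≤ 2 * π * ∑ n ∈ s, |a n| * |δ n| * (Real.sqrt (∑ k ∈ s, (a k)^2) * 4) := by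
          apply mul_le_mul_of_nonneg_left _ (by positivity)
          apply Finset.sum_le_sum; intro n hn
          exact mul_le_mul_of_nonneg_left (hrow n hn) (by positivity)
    _ = 2 * π * (Real.sqrt (∑ k ∈ s, (a k)^2) * 4) * ∑ n ∈ s, |a n| * |δ n| := by
          rw [← Finset.sum_mul]; ring
    _ ≤ 2 * π * (Real.sqrt (∑ k ∈ s, (a k)^2) * 4)
          * (Real.sqrt (∑ k ∈ s, (a k)^2) * Real.sqrt (∑' k, δ k^2)) := by
          apply mul_le_mul_of_nonneg_left hcs2 (by positivity)
    _ = 8 * π * Real.sqrt (∑' k, δ k^2)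
          * (Real.sqrt (∑ k ∈ s, (a k)^2) * Real.sqrt (∑ k ∈ s, (a k)^2)) := by ring
    _ = (8*π*Real.sqrt (∑' n, δ n^2)) * ∑ n ∈ s, (a n)^2 := by
          rw [Real.mul_self_sqrt hA]
  calc _ ≤ π * ∑ n ∈ s, (a n)^2 + (8*π*Real.sqrt (∑' n, δ n^2)) * ∑ n ∈ s, (a n)^2 :=
        add_le_add hdiag hOD
  _ = (π + 8*π*Real.sqrt (∑' n, δ n^2)) * ∑ n ∈ s, (a n)^2 := by ring

noncomputable def myMu : Measure ℝ := volume.restrict (Set.Ioo 0 π)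

instance : IsFiniteMeasure myMu :=
  ⟨by rw [myMu, Measure.restrict_apply_univ, Real.volume_Ioo]; exact ENNReal.ofReal_lt_top⟩

lemma myInt_eq (g : ℝ → ℝ) : (∫ x, g x ∂myMu) = ∫ x in (0:ℝ)..π, g x := by
  rw [myMu, ← MeasureTheory.integral_Ioc_eq_integral_Ioo,
    ← intervalIntegral.integral_of_le Real.pi_pos.le]

lemma myNorm_toLp (g : ℝ → ℝ) (hg : MemLp g 2 myMu) (B : ℝ)
    (hB : (∫ x in (0:ℝ)..π, (g x)^2) ≤ B) : ‖hg.toLp g‖ ≤ Real.sqrt B := by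
  have hsq : ‖hg.toLp g‖^2 = ∫ x in (0:ℝ)..π, (g x)^2 := by
    rw [← real_inner_self_eq_norm_sq, MeasureTheory.L2.inner_def]
    have h1 : (∫ a, (inner ℝ ((hg.toLp g : ℝ → ℝ) a) ((hg.toLp g : ℝ → ℝ) a) : ℝ) ∂myMu)
        = ∫ a, (g a)^2 ∂myMu := by
      apply integral_congr_ae
      filter_upwards [hg.coeFn_toLp] with x hx
      rw [hx, real_inner_self_eq_norm_sq, Real.norm_eq_abs, sq_abs]
    rw [h1, myInt_eq]
  have hn : 0 ≤ ‖hg.toLp g‖ := norm_nonneg _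
  calc ‖hg.toLp g‖ = Real.sqrt (‖hg.toLp g‖^2) := (Real.sqrt_sq hn).symm
  _ ≤ Real.sqrt B := Real.sqrt_le_sqrt (le_trans (le_of_eq hsq) hB)

noncomputable def myF (ϰ ϰ' : ℕ → ℝ) (N : ℕ) : ℝ → ℝ :=
  fun x => ∑ n ∈ Finset.range N, ϰ n * Real.cos (((n:ℝ) + ϰ' n) * x)

lemma myF_cont (ϰ ϰ' : ℕ → ℝ) (N : ℕ) : Continuous (myF ϰ ϰ' N) :=
  continuous_finset_sum _ (fun n _ =>
    continuous_const.mul (Real.continuous_cos.comp (continuous_const.mul continuous_id)))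

lemma myF_mem (ϰ ϰ' : ℕ → ℝ) (N : ℕ) : MemLp (myF ϰ ϰ' N) 2 myMu := by
  apply MemLp.of_bound (myF_cont ϰ ϰ' N).aestronglyMeasurable
    (∑ n ∈ Finset.range N, |ϰ n|)
  apply Filter.Eventually.of_forall
  intro x
  rw [Real.norm_eq_abs, myF]
  calc |∑ n ∈ Finset.range N, ϰ n * Real.cos (((n:ℝ) + ϰ' n) * x)|
      ≤ ∑ n ∈ Finset.range N, |ϰ n * Real.cos (((n:ℝ) + ϰ' n) * x)| :=
        Finset.abs_sum_le_sum_abs _ _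
  _ ≤ ∑ n ∈ Finset.range N, |ϰ n| := by
        apply Finset.sum_le_sum; intro n _
        rw [abs_mul]
        exact mul_le_of_le_one_right (abs_nonneg _) (Real.abs_cos_le_one _)


/-- Bessel-type synthesis inequality for the perturbed cosine system: if `(ϰ'_n) ∈ ℓ²`
with `sup_n |ϰ'_n| < 1/4`, then for every `(ϰ_n) ∈ ℓ²` the series
`F(x) = ∑ ϰ_n cos((n + ϰ'_n) x)` converges in `L²(0,π)` and
`‖F‖_{L²} ≤ C ‖(ϰ_n)‖_{ℓ²}` with `C` depending only on `(ϰ'_n)`. -/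
theorem cosine_series_L2_bound (ϰ' : ℕ → ℝ) (hϰ'2 : Summable (fun n => ϰ' n ^ 2))
    (hsmall : ∃ c : ℝ, c < 1 / 4 ∧ ∀ n, |ϰ' n| ≤ c) :
    ∃ C : ℝ, 0 < C ∧
      ∀ ϰ : ℕ → ℝ, Summable (fun n => ϰ n ^ 2) →
        ∃ F : ℝ → ℝ,
          MemLp F 2 (volume.restrict (Set.Ioo 0 π)) ∧
          Tendsto (fun N => eLpNorm
              (fun x => (∑ n ∈ Finset.range N, ϰ n * Real.cos ((n + ϰ' n) * x)) - F x)
              2 (volume.restrict (Set.Ioo 0 π))) atTop (nhds 0) ∧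
          eLpNorm F 2 (volume.restrict (Set.Ioo 0 π)) ≤
            ENNReal.ofReal (C * Real.sqrt (∑' n, ϰ n ^ 2)) := by
  classical
  obtain ⟨c, hc, hδ⟩ := hsmall
  have hKpos : 0 < π + 8*π*Real.sqrt (∑' n, ϰ' n^2) := by positivity
  refine ⟨Real.sqrt (π + 8*π*Real.sqrt (∑' n, ϰ' n^2)), Real.sqrt_pos.2 hKpos, ?_⟩
  intro ϰ hϰ
  have key : ∀ s : Finset ℕ,
      (∫ x in (0:ℝ)..π, (∑ n ∈ s, ϰ n * Real.cos (((n:ℝ) + ϰ' n) * x))^2)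
        ≤ (π + 8*π*Real.sqrt (∑' n, ϰ' n^2)) * ∑ n ∈ s, (ϰ n)^2 :=
    fun s => myQuad ϰ' c hc hδ hϰ'2 ϰ s
  -- partial sums in L²
  have hdiff : ∀ M N : ℕ, M ≤ N →
      ‖(myF_mem ϰ ϰ' N).toLp (myF ϰ ϰ' N) - (myF_mem ϰ ϰ' M).toLp (myF ϰ ϰ' M)‖
        ≤ Real.sqrt (π + 8*π*Real.sqrt (∑' n, ϰ' n^2))
          * Real.sqrt (∑ n ∈ Finset.Ico M N, (ϰ n)^2) := by
    intro M N hMN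
    have h1 : (myF_mem ϰ ϰ' N).toLp (myF ϰ ϰ' N) - (myF_mem ϰ ϰ' M).toLp (myF ϰ ϰ' M)
        = MemLp.toLp (myF ϰ ϰ' N - myF ϰ ϰ' M) ((myF_mem ϰ ϰ' N).sub (myF_mem ϰ ϰ' M)) :=
      (MemLp.toLp_sub _ _).symm
    rw [h1]
    have hint : (∫ x in (0:ℝ)..π, ((myF ϰ ϰ' N - myF ϰ ϰ' M) x)^2)
        ≤ (π + 8*π*Real.sqrt (∑' n, ϰ' n^2)) * ∑ n ∈ Finset.Ico M N, (ϰ n)^2 := by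
      have he : (fun x => ((myF ϰ ϰ' N - myF ϰ ϰ' M) x)^2)
          = fun x => (∑ n ∈ Finset.Ico M N, ϰ n * Real.cos (((n:ℝ) + ϰ' n) * x))^2 := by
        funext x
        rw [Pi.sub_apply, myF, myF, Finset.sum_Ico_eq_sub _ hMN]
      calc (∫ x in (0:ℝ)..π, ((myF ϰ ϰ' N - myF ϰ ϰ' M) x)^2)
          = ∫ x in (0:ℝ)..π, (∑ n ∈ Finset.Ico M N, ϰ n * Real.cos (((n:ℝ) + ϰ' n) * x))^2 := by
            rw [he]
      _ ≤ _ := key (Finset.Ico M N)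
    calc ‖MemLp.toLp (myF ϰ ϰ' N - myF ϰ ϰ' M) ((myF_mem ϰ ϰ' N).sub (myF_mem ϰ ϰ' M))‖
        ≤ Real.sqrt ((π + 8*π*Real.sqrt (∑' n, ϰ' n^2)) * ∑ n ∈ Finset.Ico M N, (ϰ n)^2) :=
          myNorm_toLp _ _ _ hint
    _ = Real.sqrt (π + 8*π*Real.sqrt (∑' n, ϰ' n^2))
          * Real.sqrt (∑ n ∈ Finset.Ico M N, (ϰ n)^2) := Real.sqrt_mul hKpos.le _
  -- tail bounds
  have htailb : ∀ (M N L : ℕ), L ≤ M → M ≤ N →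
      (∑ n ∈ Finset.Ico M N, (ϰ n)^2) ≤ ∑' i, ϰ (i + L)^2 := by
    intro M N L hLM hMN
    have hinj : ∀ x ∈ Finset.Ico M N, ∀ y ∈ Finset.Ico M N, x - L = y - L → x = y := by
      intro x hx y hy hxy
      simp only [Finset.mem_Ico] at hx hy
      omega
    have heq : (∑ n ∈ Finset.Ico M N, (ϰ n)^2)
        = ∑ j ∈ (Finset.Ico M N).image (· - L), ϰ (j + L)^2 := by
      rw [Finset.sum_image hinj]
      apply Finset.sum_congr rfl; intro n hn
      simp only [Finset.mem_Ico] at hn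
      have h5 : n - L + L = n := by omega
      rw [h5]
    rw [heq]
    exact Summable.sum_le_tsum _ (fun _ _ => sq_nonneg _)
      ((summable_nat_add_iff L).2 hϰ)
  -- Cauchy sequence
  have hcauchy : CauchySeq (fun N => (myF_mem ϰ ϰ' N).toLp (myF ϰ ϰ' N)) := by
    apply cauchySeq_of_le_tendsto_0
      (fun L => Real.sqrt (π + 8*π*Real.sqrt (∑' n, ϰ' n^2)) * Real.sqrt (∑' i, ϰ (i + L)^2))
    · intro n m L hn hm
      rcases le_total m n with h | h
      · rw [dist_eq_norm]
        refine le_trans (hdiff m n h) ?_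
        apply mul_le_mul_of_nonneg_left _ (Real.sqrt_nonneg _)
        exact Real.sqrt_le_sqrt (htailb m n L hm h)
      · rw [dist_comm, dist_eq_norm]
        refine le_trans (hdiff n m h) ?_
        apply mul_le_mul_of_nonneg_left _ (Real.sqrt_nonneg _)
        exact Real.sqrt_le_sqrt (htailb n m L hn h)
    · have h0 := tendsto_sum_nat_add (fun i => ϰ i^2)
      have h1 := (Real.continuous_sqrt.tendsto 0).comp h0
      rw [Real.sqrt_zero] at h1
      have h2 := h1.const_mul (Real.sqrt (π + 8*π*Real.sqrt (∑' n, ϰ' n^2)))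
      simpa using h2
  obtain ⟨G, hG⟩ := cauchySeq_tendsto_of_complete hcauchy
  refine ⟨⇑G, MeasureTheory.Lp.memLp G, ?_, ?_⟩
  · -- convergence of eLpNorms
    have heq : ∀ N : ℕ, eLpNorm
        (fun x => (∑ n ∈ Finset.range N, ϰ n * Real.cos (((n:ℝ) + ϰ' n) * x)) - G x)
        2 myMu = ENNReal.ofReal ‖(myF_mem ϰ ϰ' N).toLp (myF ϰ ϰ' N) - G‖ := by
      intro N
      have hae : (fun x => (∑ n ∈ Finset.range N, ϰ n * Real.cos (((n:ℝ) + ϰ' n) * x)) - G x)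
          =ᵐ[myMu] ⇑((myF_mem ϰ ϰ' N).toLp (myF ϰ ϰ' N) - G) := by
        filter_upwards [MeasureTheory.Lp.coeFn_sub ((myF_mem ϰ ϰ' N).toLp (myF ϰ ϰ' N)) G,
          (myF_mem ϰ ϰ' N).coeFn_toLp] with x hx1 hx2
        rw [hx1, Pi.sub_apply, hx2]
        rfl
      rw [eLpNorm_congr_ae hae, MeasureTheory.Lp.norm_def,
        ENNReal.ofReal_toReal (MeasureTheory.Lp.eLpNorm_ne_top _)]
    have hto : Tendsto (fun N => ENNReal.ofReal
        ‖(myF_mem ϰ ϰ' N).toLp (myF ϰ ϰ' N) - G‖) atTop (nhds 0) := by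
      have hd : Tendsto (fun N => ‖(myF_mem ϰ ϰ' N).toLp (myF ϰ ϰ' N) - G‖) atTop (nhds 0) := by
        have h1 := tendsto_iff_dist_tendsto_zero.1 hG
        simpa [dist_eq_norm] using h1
      have h2 := (ENNReal.continuous_ofReal.tendsto 0).comp hd
      rw [ENNReal.ofReal_zero] at h2
      exact h2
    exact hto.congr (fun N => (heq N).symm)
  · -- final bound
    have hbound : ‖G‖ ≤ Real.sqrt (π + 8*π*Real.sqrt (∑' n, ϰ' n^2))
        * Real.sqrt (∑' n, ϰ n^2) := by
      apply le_of_tendsto hG.norm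
      apply Filter.Eventually.of_forall
      intro N
      calc ‖(myF_mem ϰ ϰ' N).toLp (myF ϰ ϰ' N)‖
          ≤ Real.sqrt ((π + 8*π*Real.sqrt (∑' n, ϰ' n^2)) * ∑ n ∈ Finset.range N, (ϰ n)^2) := by
            apply myNorm_toLp
            exact key (Finset.range N)
      _ = Real.sqrt (π + 8*π*Real.sqrt (∑' n, ϰ' n^2))
            * Real.sqrt (∑ n ∈ Finset.range N, (ϰ n)^2) := Real.sqrt_mul hKpos.le _
      _ ≤ Real.sqrt (π + 8*π*Real.sqrt (∑' n, ϰ' n^2)) * Real.sqrt (∑' n, ϰ n^2) := by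
            apply mul_le_mul_of_nonneg_left _ (Real.sqrt_nonneg _)
            exact Real.sqrt_le_sqrt (Summable.sum_le_tsum _ (fun _ _ => sq_nonneg _) hϰ)
    calc eLpNorm (⇑G) 2 myMu = ENNReal.ofReal ‖G‖ := by
          rw [MeasureTheory.Lp.norm_def,
            ENNReal.ofReal_toReal (MeasureTheory.Lp.eLpNorm_ne_top _)]
    _ ≤ ENNReal.ofReal (Real.sqrt (π + 8*π*Real.sqrt (∑' n, ϰ' n^2))
          * Real.sqrt (∑' n, ϰ n^2)) := ENNReal.ofReal_le_ofReal hbound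
end

section
/- Let $(\rho_n)_{n\ge0}$ be real numbers with $\rho_n = n + \varkappa'_n$, $(\varkappa'_n) \in \ell^2$, $\sup_n|\varkappa'_n| < 1/4$. Then for every $F \in L^2(0,\pi)$, the sequence $\varkappa_n = \int_0^\pi F(x)\cos(\rho_n x)\,dx$ belongs to $\ell^2$ and $\|(\varkappa_n)\|_{\ell^2} \le C\|F\|_{L^2(0,\pi)}$, with $C$ depending only on $(\rho_n)$. -/
open MeasureTheory
open scoped Real ENNReal

namespace CosBessel

lemma abs_cos_sub_cos (a b : ℝ) : |Real.cos a - Real.cos b| ≤ |a - b| := by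
  rw [Real.cos_sub_cos, abs_mul, abs_mul]
  have h1 : |(-2 : ℝ)| = 2 := by norm_num
  rw [h1]
  have hs1 : |Real.sin ((a + b) / 2)| ≤ 1 := Real.abs_sin_le_one _
  have hs2 : |Real.sin ((a - b) / 2)| ≤ |(a - b) / 2| := Real.abs_sin_le_abs
  calc 2 * |Real.sin ((a + b) / 2)| * |Real.sin ((a - b) / 2)|
      ≤ 2 * 1 * |(a - b) / 2| :=
        mul_le_mul (mul_le_mul le_rfl hs1 (abs_nonneg _) (by norm_num)) hs2 (abs_nonneg _)
          (by norm_num)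
    _ = |a - b| := by rw [abs_div, abs_two]; ring

lemma integral_cos_int_mul (k : ℤ) (hk : k ≠ 0) :
    ∫ x in (0:ℝ)..π, Real.cos (k * x) = 0 := by
  have hk' : (k : ℝ) ≠ 0 := Int.cast_ne_zero.mpr hk
  rw [intervalIntegral.integral_comp_mul_left Real.cos hk']
  simp [integral_cos, Real.sin_int_mul_pi]

lemma integral_cos_mul_cos (m n : ℕ) :
    ∫ x in (0:ℝ)..π, Real.cos (m * x) * Real.cos (n * x)
      = if m = n then (if n = 0 then π else π / 2) else 0 := by
  have key : ∀ x : ℝ, Real.cos (m * x) * Real.cos (n * x)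
      = (Real.cos (((m : ℝ) - n) * x) + Real.cos (((m : ℝ) + n) * x)) / 2 := by
    intro x
    have h1 : ((m : ℝ) - n) * x = m * x - n * x := by ring
    have h2 : ((m : ℝ) + n) * x = m * x + n * x := by ring
    rw [h1, h2, Real.cos_sub, Real.cos_add]; ring
  have hInt : ∀ c : ℝ, IntervalIntegrable (fun x => Real.cos (c * x)) volume 0 π :=
    fun c => (Real.continuous_cos.comp (continuous_const.mul continuous_id)).intervalIntegrable _ _
  simp_rw [key]
  rw [intervalIntegral.integral_div, intervalIntegral.integral_add (hInt _) (hInt _)]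
  by_cases hmn : m = n
  · subst hmn
    by_cases hm : m = 0
    · subst hm
      simp
    · have h0 : ((m : ℝ) - m) = 0 := by ring
      have : ∫ x in (0:ℝ)..π, Real.cos (((m : ℝ) - m) * x) = π := by
        rw [h0]; simp
      rw [this]
      have h2 : ((m : ℝ) + m) = ((m + m : ℤ) : ℝ) := by push_cast; ring
      rw [h2, integral_cos_int_mul _ (by exact_mod_cast (by omega : m + m ≠ 0))]
      simp [hm]
  · have h1 : ((m : ℝ) - n) = ((m - n : ℤ) : ℝ) := by push_cast; ring
    have h2 : ((m : ℝ) + n) = ((m + n : ℤ) : ℝ) := by push_cast; ring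
    rw [h1, h2,
      integral_cos_int_mul _ (sub_ne_zero.mpr (by exact_mod_cast hmn : (m:ℤ) ≠ n)),
      integral_cos_int_mul _ (by omega : (m : ℤ) + n ≠ 0)]
    simp [hmn]

instance : IsFiniteMeasure (volume.restrict (Set.Ioo (0:ℝ) π)) := by
  constructor
  rw [Measure.restrict_apply_univ, Real.volume_Ioo]
  exact ENNReal.ofReal_lt_top

lemma memL2 {h : ℝ → ℝ} (hc : Continuous h) (B : ℝ) (hB : ∀ x, |h x| ≤ B) :
    MemLp h 2 (volume.restrict (Set.Ioo (0:ℝ) π)) :=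
  (memLp_top_of_bound hc.aestronglyMeasurable B (ae_of_all _ hB)).mono_exponent le_top

lemma inner_toLp {f g : ℝ → ℝ} (hf : MemLp f 2 (volume.restrict (Set.Ioo (0:ℝ) π)))
    (hg : MemLp g 2 (volume.restrict (Set.Ioo (0:ℝ) π))) :
    (inner ℝ (hf.toLp f) (hg.toLp g) : ℝ) = ∫ x in Set.Ioo (0:ℝ) π, f x * g x := by
  rw [L2.inner_def]
  refine integral_congr_ae ?_
  filter_upwards [hf.coeFn_toLp, hg.coeFn_toLp] with x h1 h2
  rw [h1, h2]
  simp [RCLike.inner_apply, mul_comm]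

lemma integral_Ioo_eq (f : ℝ → ℝ) :
    ∫ x in Set.Ioo (0:ℝ) π, f x = ∫ x in (0:ℝ)..π, f x := by
  rw [intervalIntegral.integral_of_le Real.pi_pos.le, integral_Ioc_eq_integral_Ioo]

lemma norm_toLp_le {h : ℝ → ℝ} (hm : MemLp h 2 (volume.restrict (Set.Ioo (0:ℝ) π))) {B : ℝ}
    (hB : 0 ≤ B) (hb : ∀ x ∈ Set.Ioo (0:ℝ) π, |h x| ≤ B) :
    ‖hm.toLp h‖ ≤ Real.sqrt π * B := by
  rw [Lp.norm_toLp h hm]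
  set μπ := volume.restrict (Set.Ioo (0:ℝ) π) with hμ
  have hae : ∀ᵐ x ∂μπ, ‖h x‖ ≤ B := by
    rw [hμ]
    exact (ae_restrict_iff' measurableSet_Ioo).2 (ae_of_all _ hb)
  have h1 : eLpNorm h 2 μπ ≤ μπ Set.univ ^ (2 : ℝ≥0∞).toReal⁻¹ * ENNReal.ofReal B :=
    eLpNorm_le_of_ae_bound hae
  have h2 : μπ Set.univ = ENNReal.ofReal π := by
    rw [hμ, Measure.restrict_apply_univ, Real.volume_Ioo, sub_zero]
  rw [h2] at h1
  have h3 : (ENNReal.ofReal π ^ (2 : ℝ≥0∞).toReal⁻¹ * ENNReal.ofReal B).toReal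
      = Real.sqrt π * B := by
    rw [ENNReal.toReal_mul, ← ENNReal.toReal_rpow, ENNReal.toReal_ofReal Real.pi_pos.le,
      ENNReal.toReal_ofReal hB, Real.sqrt_eq_rpow]
    norm_num
  calc (eLpNorm h 2 μπ).toReal
      ≤ (ENNReal.ofReal π ^ (2 : ℝ≥0∞).toReal⁻¹ * ENNReal.ofReal B).toReal :=
        ENNReal.toReal_mono
          (ENNReal.mul_ne_top
            (ENNReal.rpow_ne_top_of_nonneg (by norm_num) ENNReal.ofReal_ne_top)
            ENNReal.ofReal_ne_top) h1
    _ = Real.sqrt π * B := h3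

end CosBessel

open CosBessel

/-- Bessel property of the perturbed cosine system: if `ρ_n = n + ϰ'_n` with
`(ϰ'_n) ∈ ℓ²` and `sup_n |ϰ'_n| < 1/4`, then for every `F ∈ L²(0,π)` the sequence
`ϰ_n = ∫₀^π F(x) cos(ρ_n x) dx` is in `ℓ²` with `‖(ϰ_n)‖_{ℓ²} ≤ C ‖F‖_{L²}`,
`C` depending only on `(ρ_n)`. -/
theorem cosine_coefficients_l2_bound (ϰ' : ℕ → ℝ) (hϰ'2 : Summable (fun n => ϰ' n ^ 2))
    (hsmall : ∃ c : ℝ, c < 1 / 4 ∧ ∀ n, |ϰ' n| ≤ c) :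
    ∃ C : ℝ, 0 < C ∧
      ∀ F : ℝ → ℝ, MemLp F 2 (volume.restrict (Set.Ioo 0 π)) →
        Summable (fun n : ℕ => (∫ x in Set.Ioo 0 π, F x * Real.cos ((n + ϰ' n) * x)) ^ 2) ∧
        Real.sqrt (∑' n : ℕ, (∫ x in Set.Ioo 0 π, F x * Real.cos ((n + ϰ' n) * x)) ^ 2) ≤
          C * (eLpNorm F 2 (volume.restrict (Set.Ioo 0 π))).toReal := by
  classical
  set S := ∑' n, ϰ' n ^ 2 with hSdef
  have hS0 : 0 ≤ S := tsum_nonneg fun n => sq_nonneg _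
  have hCpos : (0:ℝ) < 2 * π + 2 * π ^ 3 * S := by positivity
  refine ⟨Real.sqrt (2 * π + 2 * π ^ 3 * S), Real.sqrt_pos.mpr hCpos, ?_⟩
  intro F hF
  set x := hF.toLp F with hxdef
  set N := (eLpNorm F 2 (volume.restrict (Set.Ioo (0:ℝ) π))).toReal with hNdef
  have hN0 : 0 ≤ N := ENNReal.toReal_nonneg
  have hNx : ‖x‖ = N := Lp.norm_toLp F hF
  have hg : ∀ r : ℝ, MemLp (fun t => Real.cos (r * t)) 2 (volume.restrict (Set.Ioo (0:ℝ) π)) :=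
    fun r => memL2 (Real.continuous_cos.comp (continuous_const.mul continuous_id)) 1
      (fun t => Real.abs_cos_le_one _)
  set c : ℕ → ℝ := fun n => Real.sqrt (if n = 0 then π⁻¹ else 2 / π) with hcdef
  have hcif : ∀ n : ℕ, (0:ℝ) < (if n = 0 then π⁻¹ else 2 / π) := by
    intro n; split <;> positivity
  have hc2 : ∀ n, c n ^ 2 = if n = 0 then π⁻¹ else 2 / π := fun n =>
    Real.sq_sqrt (hcif n).le
  have hec : ∀ n : ℕ, MemLp (fun t => c n * Real.cos (n * t)) 2
      (volume.restrict (Set.Ioo (0:ℝ) π)) := fun n => (hg n).const_mul _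
  set e : ℕ → Lp ℝ 2 (volume.restrict (Set.Ioo (0:ℝ) π)) := fun n => (hec n).toLp _ with hedef
  have hON : Orthonormal ℝ e := by
    rw [orthonormal_iff_ite]
    intro m n
    show (inner ℝ ((hec m).toLp _) ((hec n).toLp _) : ℝ) = _
    rw [inner_toLp (hec m) (hec n)]
    have hmul : ∀ t : ℝ, (c m * Real.cos (m * t)) * (c n * Real.cos (n * t))
        = (c m * c n) * (Real.cos (m * t) * Real.cos (n * t)) := fun t => by ring
    simp_rw [hmul]
    rw [integral_const_mul, integral_Ioo_eq, integral_cos_mul_cos]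
    by_cases hmn : m = n
    · subst hmn
      have : c m * c m = c m ^ 2 := (sq (c m)).symm
      rw [this, hc2]
      by_cases hm : m = 0
      · simp [hm, inv_mul_cancel₀ Real.pi_ne_zero]
      · have : (2 / π) * (π / 2) = 1 := by
          field_simp
        simp [hm, this]
    · simp [hmn]
  have hsum1 : Summable fun n => ‖(inner ℝ (e n) x : ℝ)‖ ^ 2 := hON.inner_products_summable x
  have htsum1 : ∑' n, ‖(inner ℝ (e n) x : ℝ)‖ ^ 2 ≤ ‖x‖ ^ 2 := hON.tsum_inner_products_le x
  set a : ℕ → ℝ := fun n => ∫ t in Set.Ioo (0:ℝ) π, F t * Real.cos (n * t) with hadef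
  have hinner_a : ∀ n, (inner ℝ (e n) x : ℝ) = c n * a n := by
    intro n
    show (inner ℝ ((hec n).toLp _) (hF.toLp F) : ℝ) = _
    rw [inner_toLp (hec n) hF]
    have hmul : ∀ t : ℝ, (c n * Real.cos (n * t)) * F t
        = c n * (F t * Real.cos (n * t)) := fun t => by ring
    simp_rw [hmul]
    rw [integral_const_mul, hadef]
  have hππ : ∀ n, 1 ≤ π * c n ^ 2 := by
    intro n
    rw [hc2]
    by_cases hn : n = 0
    · simp [hn, mul_inv_cancel₀ Real.pi_ne_zero]
    · have : π * (2 / π) = 2 := by field_simp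
      simp only [hn, if_false]
      rw [this]; norm_num
  have haux : ∀ n, a n ^ 2 ≤ π * ‖(inner ℝ (e n) x : ℝ)‖ ^ 2 := by
    intro n
    rw [hinner_a n, Real.norm_eq_abs, sq_abs, mul_pow]
    calc a n ^ 2 = 1 * a n ^ 2 := (one_mul _).symm
      _ ≤ (π * c n ^ 2) * a n ^ 2 := mul_le_mul_of_nonneg_right (hππ n) (sq_nonneg _)
      _ = π * (c n ^ 2 * a n ^ 2) := by ring
  have hsa : Summable fun n => a n ^ 2 :=
    Summable.of_nonneg_of_le (fun n => sq_nonneg _) haux (hsum1.mul_left π)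
  have hta : ∑' n, a n ^ 2 ≤ π * N ^ 2 := by
    calc ∑' n, a n ^ 2 ≤ ∑' n, π * ‖(inner ℝ (e n) x : ℝ)‖ ^ 2 :=
          Summable.tsum_le_tsum haux hsa (hsum1.mul_left π)
      _ = π * ∑' n, ‖(inner ℝ (e n) x : ℝ)‖ ^ 2 := tsum_mul_left
      _ ≤ π * ‖x‖ ^ 2 := mul_le_mul_of_nonneg_left htsum1 Real.pi_pos.le
      _ = π * N ^ 2 := by rw [hNx]
  set ϰ : ℕ → ℝ := fun n => ∫ t in Set.Ioo (0:ℝ) π, F t * Real.cos ((n + ϰ' n) * t) with hϰdef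
  have hϰinner : ∀ n, ϰ n = (inner ℝ x ((hg ((n : ℝ) + ϰ' n)).toLp _) : ℝ) := by
    intro n
    rw [inner_toLp hF (hg _), hϰdef]
  have hainner : ∀ n, a n = (inner ℝ x ((hg (n : ℝ)).toLp _) : ℝ) := by
    intro n
    rw [inner_toLp hF (hg _), hadef]
  have hr : ∀ n, |ϰ n - a n| ≤ N * (Real.sqrt π * (π * |ϰ' n|)) := by
    intro n
    have hd : MemLp (fun t => Real.cos (((n : ℝ) + ϰ' n) * t) - Real.cos ((n : ℝ) * t)) 2
        (volume.restrict (Set.Ioo (0:ℝ) π)) := (hg _).sub (hg _)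
    have hsub : (hg ((n : ℝ) + ϰ' n)).toLp _ - (hg ((n : ℝ))).toLp _ = hd.toLp _ :=
      (MemLp.toLp_sub (hg _) (hg _)).symm
    have heq : ϰ n - a n = (inner ℝ x ((hg ((n : ℝ) + ϰ' n)).toLp _ - (hg ((n : ℝ))).toLp _) : ℝ) := by
      rw [inner_sub_right, hϰinner, hainner]
    rw [heq, hsub]
    have hbound : ∀ t ∈ Set.Ioo (0:ℝ) π,
        |Real.cos (((n : ℝ) + ϰ' n) * t) - Real.cos ((n : ℝ) * t)| ≤ π * |ϰ' n| := by
      intro t ht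
      calc |Real.cos (((n : ℝ) + ϰ' n) * t) - Real.cos ((n : ℝ) * t)|
          ≤ |((n : ℝ) + ϰ' n) * t - (n : ℝ) * t| := abs_cos_sub_cos _ _
        _ = |ϰ' n| * |t| := by rw [← abs_mul]; ring_nf
        _ ≤ |ϰ' n| * π := by
            refine mul_le_mul_of_nonneg_left ?_ (abs_nonneg _)
            rw [abs_of_pos ht.1]; exact ht.2.le
        _ = π * |ϰ' n| := mul_comm _ _
    calc |(inner ℝ x (hd.toLp _) : ℝ)| ≤ ‖x‖ * ‖hd.toLp _‖ := abs_real_inner_le_norm _ _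
      _ ≤ N * (Real.sqrt π * (π * |ϰ' n|)) := by
          rw [hNx]
          exact mul_le_mul_of_nonneg_left (norm_toLp_le hd (by positivity) hbound) hN0
  have hr2 : ∀ n, (ϰ n - a n) ^ 2 ≤ π ^ 3 * N ^ 2 * ϰ' n ^ 2 := by
    intro n
    have h2 : (ϰ n - a n) ^ 2 ≤ (N * (Real.sqrt π * (π * |ϰ' n|))) ^ 2 := by
      rw [← sq_abs]
      exact pow_le_pow_left₀ (abs_nonneg _) (hr n) 2
    refine h2.trans_eq ?_
    have hπ : Real.sqrt π ^ 2 = π := Real.sq_sqrt Real.pi_pos.le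
    rw [mul_pow, mul_pow, mul_pow, hπ, sq_abs]
    ring
  have hsr : Summable fun n => (ϰ n - a n) ^ 2 :=
    Summable.of_nonneg_of_le (fun n => sq_nonneg _) hr2 (hϰ'2.mul_left _)
  have htr : ∑' n, (ϰ n - a n) ^ 2 ≤ π ^ 3 * N ^ 2 * S := by
    calc ∑' n, (ϰ n - a n) ^ 2 ≤ ∑' n, π ^ 3 * N ^ 2 * ϰ' n ^ 2 :=
          Summable.tsum_le_tsum hr2 hsr (hϰ'2.mul_left _)
      _ = π ^ 3 * N ^ 2 * S := tsum_mul_left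
  have hsplit : ∀ n, ϰ n ^ 2 ≤ 2 * a n ^ 2 + 2 * (ϰ n - a n) ^ 2 := by
    intro n
    nlinarith [sq_nonneg (a n - (ϰ n - a n))]
  have hsϰ : Summable fun n => ϰ n ^ 2 :=
    Summable.of_nonneg_of_le (fun n => sq_nonneg _) hsplit
      (((hsa.mul_left 2)).add (hsr.mul_left 2))
  have keyfun : ∀ n : ℕ, (∫ t in Set.Ioo (0:ℝ) π, F t * Real.cos ((n + ϰ' n) * t)) = ϰ n := by
    intro n; rw [hϰdef]
  have htϰ : ∑' n, ϰ n ^ 2 ≤ (2 * π + 2 * π ^ 3 * S) * N ^ 2 := by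
    calc ∑' n, ϰ n ^ 2 ≤ ∑' n, (2 * a n ^ 2 + 2 * (ϰ n - a n) ^ 2) :=
          Summable.tsum_le_tsum hsplit hsϰ ((hsa.mul_left 2).add (hsr.mul_left 2))
      _ = 2 * ∑' n, a n ^ 2 + 2 * ∑' n, (ϰ n - a n) ^ 2 := by
          rw [Summable.tsum_add (hsa.mul_left 2) (hsr.mul_left 2), tsum_mul_left, tsum_mul_left]
      _ ≤ 2 * (π * N ^ 2) + 2 * (π ^ 3 * N ^ 2 * S) := by
          refine add_le_add ?_ ?_
          · exact mul_le_mul_of_nonneg_left hta (by norm_num)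
          · exact mul_le_mul_of_nonneg_left htr (by norm_num)
      _ = (2 * π + 2 * π ^ 3 * S) * N ^ 2 := by ring
  constructor
  · simp only [keyfun]
    exact hsϰ
  · simp only [keyfun]
    calc Real.sqrt (∑' n, ϰ n ^ 2) ≤ Real.sqrt ((2 * π + 2 * π ^ 3 * S) * N ^ 2) :=
          Real.sqrt_le_sqrt htϰ
      _ = Real.sqrt (2 * π + 2 * π ^ 3 * S) * N := by
          rw [Real.sqrt_mul hCpos.le, Real.sqrt_sq hN0]
end
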